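/- arXiv:1911.04867 — 10 statements merged into one kernel-verified Lean document; each statement's English description precedes it below -/
import Mathlib

section
/- Let (X,G) be a G-metric space with a convex structure W, and let T : X → X be a mapping having a fixed point u (Tu = u) such that G(Tx,Ty,Tz) ≤ a·G(x,y,z) + b·G(x,Tx,Tx) + c·G(y,Ty,Ty) + d·G(z,Tz,Tz) for all x,y,z ∈ X, where a,b,c,d are nonnegative real numbers with a + 3b < 1. Let (α_n) be a sequence in [0,1] with ∑_{n=0}^∞ α_n = ∞, let x_0 ∈ X, and define the Mann iterative process x_{n+1} = W(x_n, T x_n; 1−α_n, α_n). Then G(x_n, u, u) → 0 as n → ∞, i.e. (x_n) converges strongly to the fixed point u of T. -/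
open Filter Topology

/-- A G-metric on a set `X` (Mustafa–Sims). The symmetry axiom (G5) is recorded via
the two generating permutations (swap of last two arguments and a cyclic shift),
from which all six equalities of (G5) follow. -/
structure GMetricStruct (X : Type*) where
  G : X → X → X → ℝ
  nonneg : ∀ x y z, 0 ≤ G x y z
  eq_zero_of_eq : ∀ x y z, x = y → y = z → G x y z = 0
  pos_of_ne : ∀ x y, x ≠ y → 0 < G x x y
  le_of_ne : ∀ x y z, z ≠ y → G x x y ≤ G x y z
  symm_swap : ∀ x y z, G x y z = G x z y
  symm_cycle : ∀ x y z, G x y z = G y z x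
  rect : ∀ x y z a, G x y z ≤ G x a a + G a y z

/-- A convex structure `W` on a G-metric space `(X, G)`:
for all `x, y, u, v` and `λ, β ∈ [0,1]` with `λ + β = 1`,
`G(W(x,y;λ,β), u, v) ≤ λ·G(x,u,v) + β·G(y,u,v)`. -/
def IsConvexStructure {X : Type*} (GM : GMetricStruct X) (W : X → X → ℝ → ℝ → X) : Prop :=
  ∀ x y u v : X, ∀ lam beta : ℝ, lam ∈ Set.Icc (0:ℝ) 1 → beta ∈ Set.Icc (0:ℝ) 1 →
    lam + beta = 1 →
    GM.G (W x y lam beta) u v ≤ lam * GM.G x u v + beta * GM.G y u v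

theorem mann_convergence_four_term {X : Type*} [Nonempty X] (GM : GMetricStruct X)
    (W : X → X → ℝ → ℝ → X) (hW : IsConvexStructure GM W)
    (T : X → X) (u : X) (hu : T u = u)
    (a b c d : ℝ) (ha : 0 ≤ a) (hb : 0 ≤ b) (hc : 0 ≤ c) (hd : 0 ≤ d)
    (habcd : a + 3 * b < 1)
    (hT : ∀ x y z : X, GM.G (T x) (T y) (T z) ≤
      a * GM.G x y z + b * GM.G x (T x) (T x) + c * GM.G y (T y) (T y)
        + d * GM.G z (T z) (T z))
    (α : ℕ → ℝ) (hα : ∀ n, α n ∈ Set.Icc (0:ℝ) 1)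
    (hdiv : Tendsto (fun n => ∑ k ∈ Finset.range n, α k) atTop atTop)
    (x₀ : X) (x : ℕ → X) (hx0 : x 0 = x₀)
    (hrec : ∀ n, x (n + 1) = W (x n) (T (x n)) (1 - α n) (α n)) :
    Tendsto (fun n => GM.G (x n) u u) atTop (𝓝 0) := by
  -- abbreviations
  set g : ℕ → ℝ := fun n => GM.G (x n) u u with hg
  have hgnn : ∀ n, 0 ≤ g n := fun n => GM.nonneg _ _ _
  have h2b : 0 < 1 - 2 * b := by nlinarith
  set K : ℝ := (a + b) / (1 - 2 * b) with hKdef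
  have hK0 : 0 ≤ K := div_nonneg (by linarith) h2b.le
  have hK1 : K < 1 := by
    rw [hKdef, div_lt_one h2b]; linarith
  set C : ℝ := 1 - K with hCdef
  have hC0 : 0 < C := by simp [hCdef]; linarith
  -- auxiliary G-metric fact : G x x y ≤ 2 * G x y y
  have keyGG : ∀ p q : X, GM.G p p q ≤ 2 * GM.G p q q := by
    intro p q
    have h1 := GM.rect p p q q
    have h2 : GM.G q p q = GM.G p q q := GM.symm_cycle q p q
    linarith
  have huuu : GM.G u u u = 0 := GM.eq_zero_of_eq u u u rfl rfl
  -- key estimate : G (T x n) u u ≤ K * g n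
  have hTbound : ∀ n, GM.G (T (x n)) u u ≤ K * g n := by
    intro n
    set t : ℝ := GM.G (T (x n)) u u with ht
    have h1 := hT (x n) u u
    rw [hu, huuu] at h1
    -- G (x n) (T (x n)) (T (x n)) ≤ g n + 2 t
    have h2 := GM.rect (x n) (T (x n)) (T (x n)) u
    have h3 : GM.G u (T (x n)) (T (x n)) = GM.G (T (x n)) (T (x n)) u :=
      GM.symm_cycle u (T (x n)) (T (x n))
    have h4 : GM.G (T (x n)) (T (x n)) u ≤ 2 * t := keyGG (T (x n)) u
    have h5 : GM.G (x n) (T (x n)) (T (x n)) ≤ g n + 2 * t := by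
      rw [h3] at h2; linarith
    -- combine : t ≤ a * g n + b * (g n + 2 t)
    have h6 : t ≤ a * g n + b * (g n + 2 * t) := by
      have := mul_le_mul_of_nonneg_left h5 hb
      simp only [mul_zero, add_zero] at h1
      calc t ≤ a * g n + b * GM.G (x n) (T (x n)) (T (x n)) := h1
        _ ≤ a * g n + b * (g n + 2 * t) := by linarith
    have h7 : (1 - 2 * b) * t ≤ (a + b) * g n := by nlinarith
    rw [hKdef]
    rw [div_mul_eq_mul_div, le_div_iff₀ h2b]
    linarith [h7]
  -- recursion : g (n+1) ≤ (1 - C * α n) * g n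
  have hstep : ∀ n, g (n + 1) ≤ (1 - C * α n) * g n := by
    intro n
    obtain ⟨hα0, hα1⟩ := hα n
    have hmem1 : (1 - α n) ∈ Set.Icc (0:ℝ) 1 := ⟨by linarith, by linarith⟩
    have h1 := hW (x n) (T (x n)) u u (1 - α n) (α n) hmem1 (hα n) (by ring)
    have h2 := hTbound n
    have h3 : g (n + 1) ≤ (1 - α n) * g n + α n * (K * g n) := by
      rw [hg]; simp only
      rw [hrec n]
      calc GM.G (W (x n) (T (x n)) (1 - α n) (α n)) u u
          ≤ (1 - α n) * GM.G (x n) u u + α n * GM.G (T (x n)) u u := h1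
        _ ≤ (1 - α n) * g n + α n * (K * g n) := by
            have := mul_le_mul_of_nonneg_left h2 hα0
            simp only [hg]; linarith
    calc g (n + 1) ≤ (1 - α n) * g n + α n * (K * g n) := h3
      _ = (1 - C * α n) * g n := by rw [hCdef]; ring
  -- bound : g n ≤ g 0 * exp (-(C * S n))
  have hbound : ∀ n, g n ≤ g 0 * Real.exp (-(C * ∑ k ∈ Finset.range n, α k)) := by
    intro n
    induction n with
    | zero => simp
    | succ n ih =>
      have hexp : 1 - C * α n ≤ Real.exp (-(C * α n)) := by
        have := Real.add_one_le_exp (-(C * α n)); linarith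
      calc g (n + 1) ≤ (1 - C * α n) * g n := hstep n
        _ ≤ Real.exp (-(C * α n)) * g n :=
            mul_le_mul_of_nonneg_right hexp (hgnn n)
        _ ≤ Real.exp (-(C * α n)) * (g 0 * Real.exp (-(C * ∑ k ∈ Finset.range n, α k))) :=
            mul_le_mul_of_nonneg_left ih (Real.exp_nonneg _)
        _ = g 0 * Real.exp (-(C * ∑ k ∈ Finset.range (n + 1), α k)) := by
            rw [Finset.sum_range_succ, show -(C * (∑ k ∈ Finset.range n, α k + α n)) = -(C * α n) + -(C * ∑ k ∈ Finset.range n, α k) by ring, Real.exp_add]; ring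
  -- the majorant tends to 0
  have hmaj : Tendsto (fun n => g 0 * Real.exp (-(C * ∑ k ∈ Finset.range n, α k)))
      atTop (𝓝 0) := by
    have h1 : Tendsto (fun n => C * ∑ k ∈ Finset.range n, α k) atTop atTop :=
      (tendsto_const_mul_atTop_of_pos hC0).mpr hdiv
    have h2 : Tendsto (fun n => -(C * ∑ k ∈ Finset.range n, α k)) atTop atBot :=
      tendsto_neg_atBot_iff.mpr h1
    have h3 := Real.tendsto_exp_atBot.comp h2
    have := h3.const_mul (g 0)
    simpa using this
  exact tendsto_of_tendsto_of_tendsto_of_le_of_le tendsto_const_nhds hmaj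
    (fun n => hgnn n) (fun n => hbound n)
end

section
/- Let (X,G) be a G-metric space with a convex structure W, and let T : X → X be a mapping having a fixed point u (Tu = u) such that G(Tx,Ty,Tz) ≤ a·G(x,y,z) + b·(G(x,Tx,Tx) + G(y,Ty,Ty) + G(z,Tz,Tz)) for all x,y,z ∈ X, where a,b are real numbers with 0 < a + 3b < 1 and a,b ≥ 0. Let (α_n) be a sequence in [0,1] with ∑_{n=0}^∞ α_n = ∞, let x_0 ∈ X, and define the Mann iterative process x_{n+1} = W(x_n, T x_n; 1−α_n, α_n). Then G(x_n, u, u) → 0 as n → ∞, i.e. (x_n) converges strongly to the fixed point u of T. -/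
open Filter Topology

theorem mann_convergence_sum_form {X : Type*} [Nonempty X] (GM : GMetricStruct X)
    (W : X → X → ℝ → ℝ → X) (hW : IsConvexStructure GM W)
    (T : X → X) (u : X) (hu : T u = u)
    (a b : ℝ) (ha : 0 ≤ a) (hb : 0 ≤ b)
    (hpos : 0 < a + 3 * b) (hlt : a + 3 * b < 1)
    (hT : ∀ x y z : X, GM.G (T x) (T y) (T z) ≤
      a * GM.G x y z + b * (GM.G x (T x) (T x) + GM.G y (T y) (T y)
        + GM.G z (T z) (T z)))
    (α : ℕ → ℝ) (hα : ∀ n, α n ∈ Set.Icc (0:ℝ) 1)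
    (hdiv : Tendsto (fun n => ∑ k ∈ Finset.range n, α k) atTop atTop)
    (x₀ : X) (x : ℕ → X) (hx0 : x 0 = x₀)
    (hrec : ∀ n, x (n + 1) = W (x n) (T (x n)) (1 - α n) (α n)) :
    Tendsto (fun n => GM.G (x n) u u) atTop (𝓝 0) := by
  set d : ℕ → ℝ := fun n => GM.G (x n) u u with hd
  have hc : (0:ℝ) < 1 - 2 * b := by linarith
  set q : ℝ := (a + b) / (1 - 2 * b) with hq
  have hq0 : 0 ≤ q := div_nonneg (by linarith) hc.le
  have hq1 : q < 1 := by
    rw [hq, div_lt_one hc]; linarith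
  -- key contraction for T at u
  have hkey : ∀ v : X, GM.G (T v) u u ≤ q * GM.G v u u := by
    intro v
    have h1 := hT v u u
    rw [hu] at h1
    have huu : GM.G u u u = 0 := GM.eq_zero_of_eq u u u rfl rfl
    have h2 : GM.G v (T v) (T v) ≤ GM.G v u u + GM.G u (T v) (T v) :=
      GM.rect v (T v) (T v) u
    have h3 : GM.G u (T v) (T v) ≤ 2 * GM.G (T v) u u := by
      have e1 : GM.G u (T v) (T v) = GM.G (T v) (T v) u := GM.symm_cycle u (T v) (T v)
      have e2 : GM.G (T v) (T v) u ≤ GM.G (T v) u u + GM.G u (T v) u :=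
        GM.rect (T v) (T v) u u
      have e3 : GM.G u (T v) u = GM.G (T v) u u := GM.symm_cycle u (T v) u
      linarith
    have hD0 : 0 ≤ GM.G (T v) u u := GM.nonneg _ _ _
    have h4 : (1 - 2 * b) * GM.G (T v) u u ≤ (a + b) * GM.G v u u := by nlinarith
    rw [hq, div_mul_eq_mul_div, le_div_iff₀ hc]
    linarith
  -- step inequality
  have hstep : ∀ n, d (n + 1) ≤ (1 - (1 - q) * α n) * d n := by
    intro n
    have hαn := hα n
    obtain ⟨h0, h1⟩ := hαn
    have hmem : (1 - α n) ∈ Set.Icc (0:ℝ) 1 := ⟨by linarith, by linarith⟩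
    have hWs := hW (x n) (T (x n)) u u (1 - α n) (α n) hmem ⟨h0, h1⟩ (by ring)
    have hk := hkey (x n)
    have hdn : 0 ≤ d n := GM.nonneg _ _ _
    have : d (n + 1) ≤ (1 - α n) * d n + α n * GM.G (T (x n)) u u := by
      simpa [hd, hrec n] using hWs
    have h5 : α n * GM.G (T (x n)) u u ≤ α n * (q * d n) :=
      mul_le_mul_of_nonneg_left hk h0
    nlinarith
  -- d n ≤ d 0 * exp(-(1-q) * S n)
  have hbound : ∀ n, d n ≤ d 0 * Real.exp (-(1 - q) * ∑ k ∈ Finset.range n, α k) := by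
    intro n
    induction n with
    | zero => simp
    | succ n ih =>
      have hαn := hα n
      obtain ⟨h0, h1⟩ := hαn
      have hdn : 0 ≤ d n := GM.nonneg _ _ _
      have hfac : (1 - (1 - q) * α n) ≤ Real.exp (-((1 - q) * α n)) := by
        have := Real.add_one_le_exp (-((1 - q) * α n))
        linarith
      have hfac0 : 0 ≤ 1 - (1 - q) * α n := by nlinarith
      calc d (n + 1) ≤ (1 - (1 - q) * α n) * d n := hstep n
        _ ≤ Real.exp (-((1 - q) * α n)) * d n :=
            mul_le_mul_of_nonneg_right hfac hdn
        _ ≤ Real.exp (-((1 - q) * α n)) *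
              (d 0 * Real.exp (-(1 - q) * ∑ k ∈ Finset.range n, α k)) :=
            mul_le_mul_of_nonneg_left ih (Real.exp_pos _).le
        _ = d 0 * Real.exp (-(1 - q) * ∑ k ∈ Finset.range (n + 1), α k) := by
            rw [Finset.sum_range_succ,
              show -(1 - q) * (∑ k ∈ Finset.range n, α k + α n)
                = -(1 - q) * ∑ k ∈ Finset.range n, α k + -((1 - q) * α n) by ring,
              Real.exp_add]
            ring
    -- squeeze
  have htend : Tendsto (fun n => d 0 * Real.exp (-(1 - q) * ∑ k ∈ Finset.range n, α k))
      atTop (𝓝 0) := by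
    have h1 : Tendsto (fun n => (1 - q) * ∑ k ∈ Finset.range n, α k) atTop atTop :=
      hdiv.const_mul_atTop (by linarith)
    have h2 : Tendsto (fun n => -((1 - q) * ∑ k ∈ Finset.range n, α k)) atTop atBot := by
      exact tendsto_neg_atTop_atBot.comp h1
    have h3 := Real.tendsto_exp_atBot.comp h2
    have h4 := h3.const_mul (d 0)
    simp only [Function.comp, mul_zero] at h4
    simpa only [neg_mul] using h4
  exact squeeze_zero (fun n => GM.nonneg _ _ _) hbound htend
end

section
/- Let (X,G) be a G-metric space with a convex structure W, and let T : X → X be a mapping having a fixed point u (Tu = u) such that G(Tx,Ty,Tz) ≤ a·G(x,y,z) + b·max{G(x,Tx,Tx), G(y,Ty,Ty), G(z,Tz,Tz)} for all x,y,z ∈ X, where a,b are real numbers with 0 < a + 3b < 1 and a,b ≥ 0. Let (α_n) be a sequence in [0,1] with ∑_{n=0}^∞ α_n = ∞, let x_0 ∈ X, and define the Mann iterative process x_{n+1} = W(x_n, T x_n; 1−α_n, α_n). Then G(x_n, u, u) → 0 as n → ∞, i.e. (x_n) converges strongly to the fixed point u of T. -/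
open Filter Topology

theorem mann_convergence_max_form {X : Type*} [Nonempty X] (GM : GMetricStruct X)
    (W : X → X → ℝ → ℝ → X) (hW : IsConvexStructure GM W)
    (T : X → X) (u : X) (hu : T u = u)
    (a b : ℝ) (ha : 0 ≤ a) (hb : 0 ≤ b)
    (hpos : 0 < a + 3 * b) (hlt : a + 3 * b < 1)
    (hT : ∀ x y z : X, GM.G (T x) (T y) (T z) ≤
      a * GM.G x y z + b * max (GM.G x (T x) (T x))
        (max (GM.G y (T y) (T y)) (GM.G z (T z) (T z))))
    (α : ℕ → ℝ) (hα : ∀ n, α n ∈ Set.Icc (0:ℝ) 1)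
    (hdiv : Tendsto (fun n => ∑ k ∈ Finset.range n, α k) atTop atTop)
    (x₀ : X) (x : ℕ → X) (hx0 : x 0 = x₀)
    (hrec : ∀ n, x (n + 1) = W (x n) (T (x n)) (1 - α n) (α n)) :
    Tendsto (fun n => GM.G (x n) u u) atTop (𝓝 0) := by

  have ha1 : a < 1 := by linarith
  have hb1 : (0:ℝ) < 1 - b := by linarith
  set k : ℝ := (a + a * b + b) / (1 - b) with hk
  have hk0 : 0 ≤ k := by positivity
  have hk1 : k < 1 := by
    rw [hk, div_lt_iff₀ hb1]
    nlinarith [mul_nonneg hb (sub_nonneg.2 ha1.le)]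
  -- key pointwise contraction estimate
  have key : ∀ y : X, GM.G (T y) u u ≤ k * GM.G y u u := by
    intro y
    set d := GM.G y u u with hd
    set e := GM.G y (T y) (T y) with he
    have hd0 : 0 ≤ d := GM.nonneg _ _ _
    have he0 : 0 ≤ e := GM.nonneg _ _ _
    have huu : GM.G u (T u) (T u) = 0 := by
      rw [hu]; exact GM.eq_zero_of_eq u u u rfl rfl
    -- G u y y ≤ 2 d
    have h2 : GM.G u y y ≤ 2 * d := by
      have hc1 : GM.G u y y = GM.G y y u := GM.symm_cycle u y y
      have hr := GM.rect y y u u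
      have e1 : GM.G u y u = GM.G u u y := GM.symm_swap u y u
      have e2 : GM.G u u y = d := (GM.symm_cycle y u u).symm
      linarith
    -- G u (T y) (T y) ≤ 2 a d + b e
    have h1 : GM.G u (T y) (T y) ≤ 2 * a * d + b * e := by
      have hTy := hT u y y
      rw [hu, GM.eq_zero_of_eq u u u rfl rfl, max_self, ← he,
        max_eq_right he0] at hTy
      nlinarith [mul_le_mul_of_nonneg_left h2 ha]
    -- e ≤ d + (2 a d + b e)
    have h3 : e * (1 - b) ≤ (1 + 2 * a) * d := by
      have hr := GM.rect y (T y) (T y) u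
      rw [← he, ← hd] at hr
      nlinarith
    -- G (T y) u u ≤ a d + b e
    have h4 : GM.G (T y) u u ≤ a * d + b * e := by
      have hTy := hT y u u
      rw [hu, GM.eq_zero_of_eq u u u rfl rfl, max_self, ← he,
        max_eq_left he0, ← hd] at hTy
      exact hTy
    -- combine
    rw [hk, div_mul_eq_mul_div, le_div_iff₀ hb1] at *
    · nlinarith [mul_le_mul_of_nonneg_left h3 hb]
  -- iteration estimate
  have step : ∀ n, GM.G (x (n + 1)) u u ≤ (1 - (1 - k) * α n) * GM.G (x n) u u := by
    intro n
    have hαn := hα n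
    have hW' := hW (x n) (T (x n)) u u (1 - α n) (α n)
      ⟨by linarith [hαn.2], by linarith [hαn.1]⟩ hαn (by ring)
    rw [hrec n]
    calc GM.G (W (x n) (T (x n)) (1 - α n) (α n)) u u
        ≤ (1 - α n) * GM.G (x n) u u + α n * GM.G (T (x n)) u u := hW'
      _ ≤ (1 - α n) * GM.G (x n) u u + α n * (k * GM.G (x n) u u) := by
          have := mul_le_mul_of_nonneg_left (key (x n)) hαn.1
          linarith
      _ = (1 - (1 - k) * α n) * GM.G (x n) u u := by ring
  -- exponential bound by induction
  have bound : ∀ n, GM.G (x n) u u ≤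
      GM.G (x 0) u u * Real.exp (-((1 - k) * ∑ j ∈ Finset.range n, α j)) := by
    intro n
    induction n with
    | zero => simp
    | succ n ih =>
      have h1 := step n
      have hexp : 1 - (1 - k) * α n ≤ Real.exp (-((1 - k) * α n)) := by
        have := Real.add_one_le_exp (-((1 - k) * α n)); linarith
      calc GM.G (x (n + 1)) u u ≤ (1 - (1 - k) * α n) * GM.G (x n) u u := h1
        _ ≤ Real.exp (-((1 - k) * α n)) * GM.G (x n) u u :=
            mul_le_mul_of_nonneg_right hexp (GM.nonneg _ _ _)
        _ ≤ Real.exp (-((1 - k) * α n)) *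
            (GM.G (x 0) u u * Real.exp (-((1 - k) * ∑ j ∈ Finset.range n, α j))) :=
            mul_le_mul_of_nonneg_left ih (Real.exp_nonneg _)
        _ = GM.G (x 0) u u *
            Real.exp (-((1 - k) * ∑ j ∈ Finset.range (n + 1), α j)) := by
            rw [Finset.sum_range_succ, mul_add, neg_add, Real.exp_add]; ring
  -- the exponential bound tends to 0
  have hlim : Tendsto (fun n => GM.G (x 0) u u *
      Real.exp (-((1 - k) * ∑ j ∈ Finset.range n, α j))) atTop (𝓝 0) := by
    rw [show (0:ℝ) = GM.G (x 0) u u * 0 by ring]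
    apply Tendsto.const_mul
    apply Real.tendsto_exp_atBot.comp
    have h1 : Tendsto (fun n => (1 - k) * ∑ j ∈ Finset.range n, α j) atTop atTop :=
      hdiv.const_mul_atTop (by linarith)
    exact tendsto_neg_atTop_atBot.comp h1
  exact squeeze_zero (fun n => GM.nonneg _ _ _) bound hlim
end

section
/- Let (X,G) be a G-metric space with a convex structure W, and let T : X → X be a mapping having a fixed point u (Tu = u) such that G(Tx,Ty,Tz) ≤ a·G(x,Tx,Tx) + b·G(y,Ty,Ty) + c·G(z,Tz,Tz) for all x,y,z ∈ X, where a,b,c are nonnegative real numbers with a + b + c < 1 and a < 1/2. Let (α_n) be a sequence in [0,1] with ∑_{n=0}^∞ α_n = ∞, let x_0 ∈ X, and define the Mann iterative process x_{n+1} = W(x_n, T x_n; 1−α_n, α_n). Then G(x_n, u, u) → 0 as n → ∞, i.e. (x_n) converges strongly to the fixed point u of T. -/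
open Filter Topology

theorem mann_convergence_three_term {X : Type*} [Nonempty X] (GM : GMetricStruct X)
    (W : X → X → ℝ → ℝ → X) (hW : IsConvexStructure GM W)
    (T : X → X) (u : X) (hu : T u = u)
    (a b c : ℝ) (ha : 0 ≤ a) (hb : 0 ≤ b) (hc : 0 ≤ c)
    (habc : a + b + c < 1) (ha2 : a < 1 / 2)
    (hT : ∀ x y z : X, GM.G (T x) (T y) (T z) ≤
      a * GM.G x (T x) (T x) + b * GM.G y (T y) (T y) + c * GM.G z (T z) (T z))
    (α : ℕ → ℝ) (hα : ∀ n, α n ∈ Set.Icc (0:ℝ) 1)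
    (hdiv : Tendsto (fun n => ∑ k ∈ Finset.range n, α k) atTop atTop)
    (x₀ : X) (x : ℕ → X) (hx0 : x 0 = x₀)
    (hrec : ∀ n, x (n + 1) = W (x n) (T (x n)) (1 - α n) (α n)) :
    Tendsto (fun n => GM.G (x n) u u) atTop (𝓝 0) := by
  classical
  set s : ℝ := (a + b + c) / 3 with hs_def
  have hs0 : 0 ≤ s := by positivity
  have hs3 : s < 1 / 3 := by simp only [hs_def]; linarith
  have hden : 0 < 1 - 2 * s := by linarith
  set k : ℝ := s / (1 - 2 * s) with hk_def
  have hk0 : 0 ≤ k := div_nonneg hs0 hden.le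
  have hk1 : k < 1 := by
    rw [hk_def, div_lt_one hden]; linarith
  -- key contraction bound
  have hTb : ∀ v : X, GM.G (T v) u u ≤ k * GM.G v u u := by
    intro v
    have h0 : GM.G u u u = 0 := GM.eq_zero_of_eq u u u rfl rfl
    have hA : GM.G (T v) u u ≤ a * GM.G v (T v) (T v) := by
      have := hT v u u
      rw [hu, h0] at this
      linarith
    have hB : GM.G (T v) u u ≤ b * GM.G v (T v) (T v) := by
      have := hT u v u
      rw [hu, h0] at this
      have e : GM.G u (T v) u = GM.G (T v) u u := by
        rw [GM.symm_cycle]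
      rw [e] at this
      linarith
    have hC : GM.G (T v) u u ≤ c * GM.G v (T v) (T v) := by
      have := hT u u v
      rw [hu, h0] at this
      have e : GM.G u u (T v) = GM.G (T v) u u := by
        rw [GM.symm_swap, GM.symm_cycle]
      rw [e] at this
      linarith
    have hsum : GM.G (T v) u u ≤ s * GM.G v (T v) (T v) := by
      simp only [hs_def]; linarith
    have hrect : GM.G v (T v) (T v) ≤ GM.G v u u + GM.G u (T v) (T v) :=
      GM.rect v (T v) (T v) u
    have hdouble : GM.G u (T v) (T v) ≤ 2 * GM.G (T v) u u := by
      have h1 : GM.G u (T v) (T v) = GM.G (T v) (T v) u := GM.symm_cycle u (T v) (T v)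
      have h2 := GM.rect (T v) (T v) u u
      have h3 : GM.G u (T v) u = GM.G (T v) u u := GM.symm_cycle u (T v) u
      rw [h1]; linarith
    have key : (1 - 2 * s) * GM.G (T v) u u ≤ s * GM.G v u u := by nlinarith
    rw [hk_def, div_mul_eq_mul_div, le_div_iff₀ hden]
    linarith [key]
  set ε : ℝ := 1 - k with hε_def
  have hε0 : 0 < ε := by simp only [hε_def]; linarith
  -- one-step estimate
  have hstep : ∀ n, GM.G (x (n + 1)) u u ≤ (1 - ε * α n) * GM.G (x n) u u := by
    intro n
    obtain ⟨hα0, hα1⟩ := hα n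
    have hmem1 : (1 - α n) ∈ Set.Icc (0:ℝ) 1 := ⟨by linarith, by linarith⟩
    have h1 := hW (x n) (T (x n)) u u (1 - α n) (α n) hmem1 ⟨hα0, hα1⟩ (by ring)
    rw [hrec n]
    have h2 := hTb (x n)
    have h3 := GM.nonneg (x n) u u
    have h4 := mul_le_mul_of_nonneg_left h2 (hα n).1
    simp only [hε_def]
    nlinarith [h4]
  -- geometric decay via exponentials
  set S : ℕ → ℝ := fun n => ∑ k ∈ Finset.range n, α k with hS_def
  have hle : ∀ n, GM.G (x n) u u ≤ GM.G (x 0) u u * Real.exp (-(ε * S n)) := by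
    intro n
    induction n with
    | zero =>
      simp [hS_def]
    | succ n ih =>
      have hSn : S (n + 1) = S n + α n := by
        simp [hS_def, Finset.sum_range_succ]
      have hexp : 1 - ε * α n ≤ Real.exp (-(ε * α n)) := by
        have := Real.add_one_le_exp (-(ε * α n))
        linarith
      have hnn := GM.nonneg (x n) u u
      calc GM.G (x (n + 1)) u u ≤ (1 - ε * α n) * GM.G (x n) u u := hstep n
        _ ≤ Real.exp (-(ε * α n)) * GM.G (x n) u u :=
            mul_le_mul_of_nonneg_right hexp hnn
        _ ≤ Real.exp (-(ε * α n)) * (GM.G (x 0) u u * Real.exp (-(ε * S n))) :=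
            mul_le_mul_of_nonneg_left ih (Real.exp_pos _).le
        _ = GM.G (x 0) u u * Real.exp (-(ε * S (n + 1))) := by
            rw [hSn, mul_add, neg_add, Real.exp_add]; ring
  have htop : Tendsto (fun n => ε * S n) atTop atTop := hdiv.const_mul_atTop hε0
  have hbot : Tendsto (fun n => -(ε * S n)) atTop atBot :=
    tendsto_neg_atBot_iff.mpr htop
  have hexp0 : Tendsto (fun n => Real.exp (-(ε * S n))) atTop (𝓝 0) :=
    Real.tendsto_exp_atBot.comp hbot
  have hg : Tendsto (fun n => GM.G (x 0) u u * Real.exp (-(ε * S n))) atTop (𝓝 0) := by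
    simpa using hexp0.const_mul (GM.G (x 0) u u)
  exact squeeze_zero (fun n => GM.nonneg (x n) u u) hle hg
end

section
/- Let (X,G) be a G-metric space with a convex structure W, and let T : X → X be a mapping having a fixed point u (Tu = u) such that G(Tx,Ty,Tz) ≤ k·(G(x,Tx,Tx) + G(y,Ty,Ty) + G(z,Tz,Tz)) for all x,y,z ∈ X, where 0 < k < 1/3. Let (α_n) be a sequence in [0,1] with ∑_{n=0}^∞ α_n = ∞, let x_0 ∈ X, and define the Mann iterative process x_{n+1} = W(x_n, T x_n; 1−α_n, α_n). Then G(x_n, u, u) → 0 as n → ∞, i.e. (x_n) converges strongly to the fixed point u of T. -/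
open Filter Topology

theorem mann_convergence_kannan_type {X : Type*} [Nonempty X] (GM : GMetricStruct X)
    (W : X → X → ℝ → ℝ → X) (hW : IsConvexStructure GM W)
    (T : X → X) (u : X) (hu : T u = u)
    (k : ℝ) (hk0 : 0 < k) (hk : k < 1 / 3)
    (hT : ∀ x y z : X, GM.G (T x) (T y) (T z) ≤
      k * (GM.G x (T x) (T x) + GM.G y (T y) (T y) + GM.G z (T z) (T z)))
    (α : ℕ → ℝ) (hα : ∀ n, α n ∈ Set.Icc (0:ℝ) 1)
    (hdiv : Tendsto (fun n => ∑ k ∈ Finset.range n, α k) atTop atTop)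
    (x₀ : X) (x : ℕ → X) (hx0 : x 0 = x₀)
    (hrec : ∀ n, x (n + 1) = W (x n) (T (x n)) (1 - α n) (α n)) :
    Tendsto (fun n => GM.G (x n) u u) atTop (𝓝 0) := by
  have h2k : 0 < 1 - 2 * k := by linarith
  set c : ℝ := k / (1 - 2 * k) with hc
  have hc0 : 0 ≤ c := div_nonneg hk0.le h2k.le
  have hc1 : c < 1 := (div_lt_one h2k).2 (by linarith)
  have hu0 : GM.G u (T u) (T u) = 0 := by
    rw [hu]; exact GM.eq_zero_of_eq u u u rfl rfl
  -- bound G(y, Ty, Ty) by G(y,u,u)/(1-2k)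
  have hGxx : ∀ y : X, GM.G y (T y) (T y) * (1 - 2 * k) ≤ GM.G y u u := by
    intro y
    have h1 : GM.G y (T y) (T y) ≤ GM.G y u u + GM.G u (T y) (T y) :=
      GM.rect y (T y) (T y) u
    have h2 := hT u y y
    rw [hu] at h2
    have huu : GM.G u u u = 0 := GM.eq_zero_of_eq u u u rfl rfl
    rw [huu] at h2
    linarith
  -- contraction toward u
  have hTstep : ∀ y : X, GM.G (T y) u u ≤ c * GM.G y u u := by
    intro y
    have h2 := hT y u u
    rw [hu] at h2
    have huu : GM.G u u u = 0 := GM.eq_zero_of_eq u u u rfl rfl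
    rw [huu] at h2
    have h3 := hGxx y
    have hk' : GM.G (T y) u u ≤ k * GM.G y (T y) (T y) := by linarith
    calc GM.G (T y) u u ≤ k * GM.G y (T y) (T y) := hk'
      _ ≤ c * GM.G y u u := by
          rw [hc, div_mul_eq_mul_div, le_div_iff₀ h2k]
          nlinarith [GM.nonneg y u u]
  set d : ℕ → ℝ := fun n => GM.G (x n) u u with hd
  have hdnn : ∀ n, 0 ≤ d n := fun n => GM.nonneg _ _ _
  have hstep : ∀ n, d (n + 1) ≤ (1 - (1 - c) * α n) * d n := by
    intro n
    have hαn := hα n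
    have h1 : (1 - α n) ∈ Set.Icc (0:ℝ) 1 := ⟨by linarith [hαn.2], by linarith [hαn.1]⟩
    have hWn := hW (x n) (T (x n)) u u (1 - α n) (α n) h1 hαn (by ring)
    rw [← hrec n] at hWn
    have h2 := hTstep (x n)
    have h3 : α n * GM.G (T (x n)) u u ≤ α n * (c * GM.G (x n) u u) :=
      mul_le_mul_of_nonneg_left h2 hαn.1
    calc d (n + 1) ≤ (1 - α n) * d n + α n * GM.G (T (x n)) u u := hWn
      _ ≤ (1 - α n) * d n + α n * (c * d n) := by linarith
      _ = (1 - (1 - c) * α n) * d n := by ring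
  have hexp : ∀ n, d n ≤ d 0 * Real.exp (-((1 - c) * ∑ j ∈ Finset.range n, α j)) := by
    intro n
    induction n with
    | zero => simp
    | succ m ih =>
      have hαm := hα m
      have hfac : (1 - (1 - c) * α m) ≤ Real.exp (-((1 - c) * α m)) := by
        have := Real.add_one_le_exp (-((1 - c) * α m))
        linarith
      have hfacnn : 0 ≤ 1 - (1 - c) * α m := by nlinarith [hαm.1, hαm.2]
      calc d (m + 1) ≤ (1 - (1 - c) * α m) * d m := hstep m
        _ ≤ Real.exp (-((1 - c) * α m)) * d m :=
            mul_le_mul_of_nonneg_right hfac (hdnn m)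
        _ ≤ Real.exp (-((1 - c) * α m)) *
              (d 0 * Real.exp (-((1 - c) * ∑ j ∈ Finset.range m, α j))) :=
            mul_le_mul_of_nonneg_left ih (Real.exp_nonneg _)
        _ = d 0 * Real.exp (-((1 - c) * ∑ j ∈ Finset.range (m + 1), α j)) := by
            rw [Finset.sum_range_succ]
            rw [show -((1 - c) * (∑ j ∈ Finset.range m, α j + α m)) =
              -((1 - c) * α m) + -((1 - c) * ∑ j ∈ Finset.range m, α j) from by ring,
              Real.exp_add]
            ring
  have htend : Tendsto (fun n => d 0 * Real.exp (-((1 - c) * ∑ j ∈ Finset.range n, α j)))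
      atTop (𝓝 0) := by
    have h1 : Tendsto (fun n => (1 - c) * ∑ j ∈ Finset.range n, α j) atTop atTop :=
      hdiv.const_mul_atTop (by linarith)
    have h2 : Tendsto (fun n => -((1 - c) * ∑ j ∈ Finset.range n, α j)) atTop atBot := by
      exact tendsto_neg_atTop_atBot.comp h1
    have h3 : Tendsto (fun n => Real.exp (-((1 - c) * ∑ j ∈ Finset.range n, α j)))
        atTop (𝓝 0) := Real.tendsto_exp_atBot.comp h2
    simpa using h3.const_mul (d 0)
  exact squeeze_zero hdnn hexp htend
end

section
/- Let (X,G) be a G-metric space and let T : X → X be a mapping with a fixed point u (Tu = u) such that G(Tx,Ty,Tz) ≤ a·G(x,y,z) + b·G(x,Tx,Tx) + c·G(y,Ty,Ty) + d·G(z,Tz,Tz) for all x,y,z ∈ X, where a,b,c,d are nonnegative real numbers with a + 3b < 1. Then for every x ∈ X, G(Tx, u, u) ≤ ((a+b)/(1−2b))·G(x, u, u). -/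
open Filter Topology

theorem key_estimate_four_term {X : Type*} [Nonempty X] (GM : GMetricStruct X)
    (T : X → X) (u : X) (hu : T u = u)
    (a b c d : ℝ) (ha : 0 ≤ a) (hb : 0 ≤ b) (hc : 0 ≤ c) (hd : 0 ≤ d)
    (habcd : a + 3 * b < 1)
    (hT : ∀ x y z : X, GM.G (T x) (T y) (T z) ≤
      a * GM.G x y z + b * GM.G x (T x) (T x) + c * GM.G y (T y) (T y)
        + d * GM.G z (T z) (T z)) :
    ∀ x : X, GM.G (T x) u u ≤ ((a + b) / (1 - 2 * b)) * GM.G x u u := by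
  intro x
  have h0 : GM.G u u u = 0 := GM.eq_zero_of_eq _ _ _ rfl rfl
  have h1 := hT x u u
  rw [hu, h0] at h1
  -- G(u, Tx, Tx) ≤ 2 G(Tx, u, u)
  have key : GM.G u (T x) (T x) ≤ 2 * GM.G (T x) u u := by
    have e1 : GM.G u (T x) (T x) = GM.G (T x) (T x) u := GM.symm_cycle _ _ _
    have e2 := GM.rect (T x) (T x) u u
    have e3 : GM.G u (T x) u = GM.G (T x) u u := by
      rw [GM.symm_cycle u (T x) u, GM.symm_swap]
    rw [e1]
    calc GM.G (T x) (T x) u ≤ GM.G (T x) u u + GM.G u (T x) u := e2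
      _ = 2 * GM.G (T x) u u := by rw [e3]; ring
  have h2 : GM.G x (T x) (T x) ≤ GM.G x u u + GM.G u (T x) (T x) := GM.rect _ _ _ _
  have hden : 0 < 1 - 2 * b := by linarith
  rw [div_mul_eq_mul_div, le_div_iff₀ hden]
  nlinarith [mul_le_mul_of_nonneg_left h2 hb, mul_le_mul_of_nonneg_left key hb]
end

section
/- Let (X,G) be a complete G-metric space and let T : X → X satisfy G(Tx,Ty,Tz) ≤ a·G(x,y,z) + b·G(x,Tx,Tx) + c·G(y,Ty,Ty) + d·G(z,Tz,Tz) for all x,y,z ∈ X, where a,b,c,d are nonnegative real numbers with a + b + c + d < 1. Then T has a unique fixed point u ∈ X (Tu = u), and T is G-continuous at u. -/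
open Filter Topology

/-- A sequence `x` G-converges to `l` iff `G(x_n, x_n, l) → 0`. -/
def GConvergesTo {X : Type*} (GM : GMetricStruct X) (x : ℕ → X) (l : X) : Prop :=
  Tendsto (fun n => GM.G (x n) (x n) l) atTop (𝓝 0)

/-- A sequence `x` is G-Cauchy iff `G(x_n, x_m, x_l) → 0` as `n, m, l → ∞`. -/
def GCauchySeq {X : Type*} (GM : GMetricStruct X) (x : ℕ → X) : Prop :=
  ∀ ε : ℝ, 0 < ε → ∃ N : ℕ, ∀ n ≥ N, ∀ m ≥ N, ∀ l ≥ N, GM.G (x n) (x m) (x l) < ε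

/-- A G-metric space is complete iff every G-Cauchy sequence G-converges. -/
def GComplete {X : Type*} (GM : GMetricStruct X) : Prop :=
  ∀ x : ℕ → X, GCauchySeq GM x → ∃ l : X, GConvergesTo GM x l

/-- `T` is G-continuous at `u` iff it maps sequences G-converging to `u`
to sequences G-converging to `T u`. -/
def GContinuousAt {X : Type*} (GM : GMetricStruct X) (T : X → X) (u : X) : Prop :=
  ∀ y : ℕ → X, GConvergesTo GM y u → GConvergesTo GM (fun n => T (y n)) (T u)
lemma twiceG {X : Type*} (GM : GMetricStruct X) (x y : X) :
    GM.G x y y ≤ 2 * GM.G x x y := by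
  have h1 : GM.G x y y = GM.G y x y := by
    rw [GM.symm_cycle x y y, GM.symm_cycle y y x]
  have h2 : GM.G y x y ≤ GM.G y x x + GM.G x x y := GM.rect y x y x
  have h3 : GM.G y x x = GM.G x x y := GM.symm_cycle y x x
  linarith

theorem fixed_point_four_term {X : Type*} [Nonempty X] (GM : GMetricStruct X)
    (hcomp : GComplete GM) (T : X → X)
    (a b c d : ℝ) (ha : 0 ≤ a) (hb : 0 ≤ b) (hc : 0 ≤ c) (hd : 0 ≤ d)
    (habcd : a + b + c + d < 1)
    (hT : ∀ x y z : X, GM.G (T x) (T y) (T z) ≤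
      a * GM.G x y z + b * GM.G x (T x) (T x) + c * GM.G y (T y) (T y)
        + d * GM.G z (T z) (T z)) :
    ∃ u : X, T u = u ∧ (∀ v : X, T v = v → v = u) ∧ GContinuousAt GM T u := by
  classical
  have h1s : (0:ℝ) < 1 - (c + d) := by linarith
  set k : ℝ := (a + b) / (1 - (c + d)) with hkdef
  have hk0 : 0 ≤ k := div_nonneg (by linarith) h1s.le
  have hk1 : k < 1 := (div_lt_one h1s).2 (by linarith)
  obtain ⟨x0⟩ := ‹Nonempty X›
  set x : ℕ → X := fun n => T^[n] x0 with hxdef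
  have hx : ∀ n, x (n+1) = T (x n) := fun n => Function.iterate_succ_apply' T n x0
  -- one-step contraction on consecutive distances
  have hstep : ∀ n, GM.G (x (n+1)) (x (n+1+1)) (x (n+1+1)) ≤
      k * GM.G (x n) (x (n+1)) (x (n+1)) := by
    intro n
    have h := hT (x n) (x (n+1)) (x (n+1))
    rw [← hx n, ← hx (n+1)] at h
    have hlin : GM.G (x (n+1)) (x (n+1+1)) (x (n+1+1)) * (1 - (c + d)) ≤
        (a + b) * GM.G (x n) (x (n+1)) (x (n+1)) := by linarith
    have := (le_div_iff₀ h1s).2 hlin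
    rw [hkdef, div_mul_eq_mul_div]
    linarith
  set D : ℝ := GM.G (x 0) (x 1) (x 1) with hDdef
  have hD0 : 0 ≤ D := GM.nonneg _ _ _
  have hgeo : ∀ n, GM.G (x n) (x (n+1)) (x (n+1)) ≤ k ^ n * D := by
    intro n
    induction n with
    | zero => simp [hDdef]
    | succ n ih =>
        calc GM.G (x (n+1)) (x (n+1+1)) (x (n+1+1)) ≤ k * GM.G (x n) (x (n+1)) (x (n+1)) :=
              hstep n
          _ ≤ k * (k ^ n * D) := mul_le_mul_of_nonneg_left ih hk0
          _ = k ^ (n+1) * D := by rw [pow_succ]; ring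
  have h1k : (0:ℝ) < 1 - k := by linarith
  set C : ℝ := D / (1 - k) with hCdef
  have hC : C * (1 - k) = D := div_mul_cancel₀ _ h1k.ne'
  have hC0 : 0 ≤ C := div_nonneg hD0 h1k.le
  -- key geometric bound
  have key : ∀ j n, GM.G (x n) (x (n+j)) (x (n+j)) ≤ k ^ n * C := by
    intro j
    induction j with
    | zero =>
        intro n
        have : GM.G (x n) (x (n+0)) (x (n+0)) = 0 := GM.eq_zero_of_eq _ _ _ rfl rfl
        rw [this]
        positivity
    | succ j ih =>
        intro n
        have ih' := ih (n+1)
        rw [show n+1+j = n+(j+1) from by omega] at ih'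
        have r := GM.rect (x n) (x (n+(j+1))) (x (n+(j+1))) (x (n+1))
        have hg := hgeo n
        have hDC : k ^ n * D + k ^ (n+1) * C = k ^ n * C := by
          rw [← hC, pow_succ]; ring
        linarith
  have key' : ∀ n m, n ≤ m → GM.G (x n) (x m) (x m) ≤ k ^ n * C := by
    intro n m h
    obtain ⟨j, rfl⟩ := Nat.exists_eq_add_of_le h
    exact key j n
  -- Cauchy
  have hcauchy : GCauchySeq GM x := by
    intro ε hε
    have htend : Tendsto (fun N : ℕ => 6 * (k ^ N * C)) atTop (𝓝 0) := by
      have := ((tendsto_pow_atTop_nhds_zero_of_lt_one hk0 hk1).mul_const C).const_mul 6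
      simpa using this
    have hev := htend.eventually (gt_mem_nhds hε)
    rw [eventually_atTop] at hev
    obtain ⟨N, hN⟩ := hev
    refine ⟨N, ?_⟩
    intro n hn m hm l hl
    have bNd2 : ∀ p, N ≤ p → GM.G (x p) (x N) (x N) ≤ 2 * (k ^ N * C) := by
      intro p hp
      have h1 := twiceG GM (x p) (x N)
      have h2 : GM.G (x p) (x p) (x N) = GM.G (x N) (x p) (x p) := by
        rw [GM.symm_cycle (x p) (x p) (x N), GM.symm_cycle (x p) (x N) (x p)]
      have h3 := key' N p hp
      linarith
    have r1 : GM.G (x n) (x m) (x l) ≤ GM.G (x n) (x N) (x N) + GM.G (x N) (x m) (x l) :=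
      GM.rect _ _ _ _
    have r2 : GM.G (x N) (x m) (x l) = GM.G (x m) (x l) (x N) := GM.symm_cycle _ _ _
    have r3 : GM.G (x m) (x l) (x N) ≤ GM.G (x m) (x N) (x N) + GM.G (x N) (x l) (x N) :=
      GM.rect _ _ _ _
    have r4 : GM.G (x N) (x l) (x N) = GM.G (x l) (x N) (x N) := GM.symm_cycle _ _ _
    have := hN N le_rfl
    linarith [bNd2 n hn, bNd2 m hm, bNd2 l hl]
  obtain ⟨u, hu⟩ := hcomp x hcauchy
  have hu' : Tendsto (fun n => GM.G (x n) (x n) u) atTop (𝓝 0) := hu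
  -- q = G(u, Tu, Tu) = 0
  have key2 : ∀ n : ℕ, (1 - (c + d)) * GM.G u (T u) (T u) ≤
      GM.G (x (n+1)) (x (n+1)) u + 2 * (a * GM.G (x n) (x n) u) + b * (k ^ n * D) := by
    intro n
    have r1 : GM.G u (T u) (T u) ≤
        GM.G u (x (n+1)) (x (n+1)) + GM.G (x (n+1)) (T u) (T u) := GM.rect _ _ _ _
    have r2 := hT (x n) u u
    rw [← hx n] at r2
    have r3 := mul_le_mul_of_nonneg_left (twiceG GM (x n) u) ha
    have r4 := mul_le_mul_of_nonneg_left (hgeo n) hb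
    have r5 : GM.G u (x (n+1)) (x (n+1)) = GM.G (x (n+1)) (x (n+1)) u := GM.symm_cycle _ _ _
    linarith
  have htot : Tendsto (fun n : ℕ => GM.G (x (n+1)) (x (n+1)) u
      + 2 * (a * GM.G (x n) (x n) u) + b * (k ^ n * D)) atTop (𝓝 0) := by
    have t1 : Tendsto (fun n : ℕ => GM.G (x (n+1)) (x (n+1)) u) atTop (𝓝 0) := by
      have := hu'.comp (tendsto_add_atTop_nat 1)
      exact this
    have t2 : Tendsto (fun n : ℕ => 2 * (a * GM.G (x n) (x n) u)) atTop (𝓝 0) := by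
      have := (hu'.const_mul a).const_mul 2
      simpa using this
    have t3 : Tendsto (fun n : ℕ => b * (k ^ n * D)) atTop (𝓝 0) := by
      have := (((tendsto_pow_atTop_nhds_zero_of_lt_one hk0 hk1).mul_const D).const_mul b)
      simpa using this
    have := (t1.add t2).add t3
    simpa using this
  have hqle : (1 - (c + d)) * GM.G u (T u) (T u) ≤ 0 := ge_of_tendsto' htot key2
  have hq0 : GM.G u (T u) (T u) = 0 := by
    have hn := GM.nonneg u (T u) (T u)
    nlinarith
  have htu : T u = u := by
    by_contra hne
    have hpos := GM.pos_of_ne (T u) u hne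
    have heq : GM.G (T u) (T u) u = GM.G u (T u) (T u) := by
      rw [GM.symm_cycle (T u) (T u) u, GM.symm_cycle (T u) u (T u)]
    rw [heq, hq0] at hpos
    exact lt_irrefl 0 hpos
  refine ⟨u, htu, ?_, ?_⟩
  · -- uniqueness
    intro v hv
    by_contra hne
    have h := hT v u u
    rw [hv, htu] at h
    have z1 : GM.G v v v = 0 := GM.eq_zero_of_eq _ _ _ rfl rfl
    have z2 : GM.G u u u = 0 := GM.eq_zero_of_eq _ _ _ rfl rfl
    have zb : b * GM.G v v v = 0 := by rw [z1]; ring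
    have zc : c * GM.G u u u = 0 := by rw [z2]; ring
    have zd : d * GM.G u u u = 0 := by rw [z2]; ring
    have hpos : 0 < GM.G u u v := GM.pos_of_ne u v (fun h' => hne h'.symm)
    have heq : GM.G u u v = GM.G v u u := by
      rw [GM.symm_cycle u u v, GM.symm_cycle u v u]
    rw [heq] at hpos
    have hmul : 0 < (1 - a) * GM.G v u u := mul_pos (by linarith) hpos
    nlinarith
  · -- continuity
    intro y hy
    have hy' : Tendsto (fun n => GM.G (y n) (y n) u) atTop (𝓝 0) := hy
    have ht1 : (0:ℝ) < 1 - (b + c) := by linarith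
    set K : ℝ := (a + 2 * (b + c)) / (1 - (b + c)) with hKdef
    have hbd : ∀ n, GM.G (T (y n)) (T (y n)) (T u) ≤ K * GM.G (y n) (y n) u := by
      intro n
      have h := hT (y n) (y n) u
      have zb : b * GM.G u (T u) (T u) = 0 := by rw [hq0]; ring
      have zd : d * GM.G u (T u) (T u) = 0 := by rw [hq0]; ring
      have r : GM.G (y n) (T (y n)) (T (y n)) ≤
          GM.G (y n) u u + GM.G u (T (y n)) (T (y n)) := GM.rect _ _ _ _
      have e1 : GM.G u (T (y n)) (T (y n)) = GM.G (T (y n)) (T (y n)) (T u) := by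
        rw [htu, GM.symm_cycle u (T (y n)) (T (y n))]
      rw [e1] at r
      have r' := mul_le_mul_of_nonneg_left r (show (0:ℝ) ≤ b + c by linarith)
      have tw' := mul_le_mul_of_nonneg_left (twiceG GM (y n) u)
        (show (0:ℝ) ≤ b + c by linarith)
      have step1 : (1 - (b + c)) * GM.G (T (y n)) (T (y n)) (T u) ≤
          (a + 2 * (b + c)) * GM.G (y n) (y n) u := by nlinarith [h, r', tw', zd]
      have hdiv : GM.G (T (y n)) (T (y n)) (T u) ≤
          (a + 2 * (b + c)) * GM.G (y n) (y n) u / (1 - (b + c)) :=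
        (le_div_iff₀ ht1).2 (by linarith)
      have : K * GM.G (y n) (y n) u =
          (a + 2 * (b + c)) * GM.G (y n) (y n) u / (1 - (b + c)) := by
        rw [hKdef, div_mul_eq_mul_div]
      linarith
    have hK0 : 0 ≤ K := div_nonneg (by linarith) ht1.le
    exact squeeze_zero (fun n => GM.nonneg _ _ _) hbd (by simpa using hy'.const_mul K)
end

section
/- Let (X,G) be a complete G-metric space and let T : X → X satisfy G(Tx,Ty,Tz) ≤ a·G(x,y,z) + b·G(x,x,Tx) + c·G(y,y,Ty) + d·G(z,z,Tz) for all x,y,z ∈ X, where a,b,c,d are nonnegative real numbers with a + b + c + d < 1. Then T has a unique fixed point u ∈ X (Tu = u), and T is G-continuous at u. -/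
open Filter Topology

theorem fixed_point_four_term' {X : Type*} [Nonempty X] (GM : GMetricStruct X)
    (hcomp : GComplete GM) (T : X → X)
    (a b c d : ℝ) (ha : 0 ≤ a) (hb : 0 ≤ b) (hc : 0 ≤ c) (hd : 0 ≤ d)
    (habcd : a + b + c + d < 1)
    (hT : ∀ x y z : X, GM.G (T x) (T y) (T z) ≤
      a * GM.G x y z + b * GM.G x x (T x) + c * GM.G y y (T y)
        + d * GM.G z z (T z)) :
    ∃ u : X, T u = u ∧ (∀ v : X, T v = v → v = u) ∧ GContinuousAt GM T u := by
  classical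
  -- basic symmetry facts
  have haab : ∀ p q : X, GM.G p p q = GM.G q p p := fun p q => by
    rw [GM.symm_cycle, GM.symm_cycle]
  have hdouble : ∀ p q : X, GM.G p q q ≤ 2 * GM.G p p q := by
    intro p q
    have h1 : GM.G p q q = GM.G q q p := GM.symm_cycle p q q
    have h2 := GM.rect q q p p
    have h3 : GM.G q p p = GM.G p p q := GM.symm_cycle q p p
    have h4 : GM.G p q p = GM.G p p q := GM.symm_swap p q p
    linarith
  have hd1 : (0:ℝ) < 1 - d := by linarith
  have hb1 : (0:ℝ) < 1 - b := by linarith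
  set k : ℝ := (a + b + c) / (1 - d) with hkdef
  have hk0 : 0 ≤ k := div_nonneg (by linarith) hd1.le
  have hk1 : k < 1 := (div_lt_one hd1).2 (by linarith)
  have h1k : (0:ℝ) < 1 - k := by linarith
  have hkd : k * (1 - d) = a + b + c := div_mul_cancel₀ _ (ne_of_gt hd1)
  -- the Picard iterates
  obtain ⟨x0⟩ := ‹Nonempty X›
  set x : ℕ → X := fun n => T^[n] x0 with hxdef
  have hx : ∀ n, x (n + 1) = T (x n) := fun n => Function.iterate_succ_apply' T n x0
  set g : ℕ → ℝ := fun n => GM.G (x n) (x n) (x (n + 1)) with hgdef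
  have hg0 : ∀ n, 0 ≤ g n := fun n => GM.nonneg _ _ _
  have hgrec : ∀ n, g (n + 1) ≤ k * g n := by
    intro n
    have h := hT (x n) (x n) (x (n + 1))
    rw [← hx n, ← hx (n + 1)] at h
    have h2 : (1 - d) * g (n + 1) ≤ (a + b + c) * g n := by
      simp only [hgdef] at *; linarith
    have h4 : (1 - d) * (k * g n) = (a + b + c) * g n := by rw [← hkd]; ring
    exact le_of_mul_le_mul_left (by linarith) hd1
  have hgpow : ∀ n, g n ≤ g 0 * k ^ n := by
    intro n
    induction n with
    | zero => simp
    | succ n ih =>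
      calc g (n + 1) ≤ k * g n := hgrec n
        _ ≤ k * (g 0 * k ^ n) := mul_le_mul_of_nonneg_left ih hk0
        _ = g 0 * k ^ (n + 1) := by ring
  have hg00 : 0 ≤ g 0 := hg0 0
  -- telescoping bound
  have htel : ∀ n m, n ≤ m → GM.G (x m) (x n) (x n) ≤ g 0 * (k ^ n - k ^ m) / (1 - k) := by
    intro n m hnm
    induction m, hnm using Nat.le_induction with
    | base =>
      have : GM.G (x n) (x n) (x n) = 0 := GM.eq_zero_of_eq _ _ _ rfl rfl
      rw [this]; simp
    | succ m hm ih =>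
      have hrect := GM.rect (x (m + 1)) (x n) (x n) (x m)
      have heq : GM.G (x (m + 1)) (x m) (x m) = g m := (haab (x m) (x (m + 1))).symm
      have hgm : g m ≤ g 0 * k ^ m := hgpow m
      have key : g 0 * (k ^ n - k ^ (m + 1)) / (1 - k)
          = g 0 * k ^ m + g 0 * (k ^ n - k ^ m) / (1 - k) := by
        field_simp
        ring
      rw [key]
      linarith
  have hpown : ∀ m : ℕ, (0:ℝ) ≤ k ^ m := fun m => pow_nonneg hk0 m
  have hbound : ∀ n m, n ≤ m → GM.G (x m) (x n) (x n) ≤ g 0 * k ^ n / (1 - k) := by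
    intro n m hnm
    refine (htel n m hnm).trans ?_
    have : g 0 * (k ^ n - k ^ m) ≤ g 0 * k ^ n := by nlinarith [hpown m]
    exact div_le_div_of_nonneg_right this h1k.le
  -- the bound sequence tends to zero
  have hBtend : Tendsto (fun n => g 0 * k ^ n / (1 - k)) atTop (𝓝 0) := by
    have h1 := tendsto_pow_atTop_nhds_zero_of_lt_one hk0 hk1
    have h2 := (h1.const_mul (g 0)).div_const (1 - k)
    simpa using h2
  -- Cauchy
  have hcauchy : GCauchySeq GM x := by
    intro ε hε
    have hev : ∀ᶠ n in atTop, g 0 * k ^ n / (1 - k) < ε / 3 :=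
      hBtend.eventually (gt_mem_nhds (by positivity))
    obtain ⟨N, hN⟩ := hev.exists
    refine ⟨N, fun n hn m hm l hl => ?_⟩
    have s1 := GM.rect (x n) (x m) (x l) (x N)
    have s2 : GM.G (x N) (x m) (x l) = GM.G (x m) (x l) (x N) := GM.symm_cycle _ _ _
    have s3 := GM.rect (x m) (x l) (x N) (x N)
    have s4 : GM.G (x N) (x l) (x N) = GM.G (x l) (x N) (x N) := by
      rw [GM.symm_swap, haab]
    have b1 : GM.G (x n) (x N) (x N) ≤ g 0 * k ^ N / (1 - k) := hbound N n hn
    have b2 : GM.G (x m) (x N) (x N) ≤ g 0 * k ^ N / (1 - k) := hbound N m hm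
    have b3 : GM.G (x l) (x N) (x N) ≤ g 0 * k ^ N / (1 - k) := hbound N l hl
    linarith
  obtain ⟨u, hu⟩ := hcomp x hcauchy
  have hu' : Tendsto (fun n => GM.G (x n) (x n) u) atTop (𝓝 0) := hu
  -- g tends to zero
  have hgtend : Tendsto g atTop (𝓝 0) := by
    refine squeeze_zero hg0 hgpow ?_
    simpa using (tendsto_pow_atTop_nhds_zero_of_lt_one hk0 hk1).const_mul (g 0)
  have hqtend : Tendsto (fun n => GM.G (x (n + 1)) (x (n + 1)) u) atTop (𝓝 0) :=
    hu'.comp (tendsto_add_atTop_nat 1)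
  -- the fixed point
  have hDkey : ∀ n, (1 - d) * GM.G u u (T u)
      ≤ a * GM.G (x n) (x n) u + (b + c) * g n + 2 * GM.G (x (n + 1)) (x (n + 1)) u := by
    intro n
    have h0 : GM.G u u (T u) = GM.G (T u) u u := haab u (T u)
    have h1 := GM.rect (T u) u u (x (n + 1))
    have h2 : GM.G (T u) (x (n + 1)) (x (n + 1)) = GM.G (x (n + 1)) (x (n + 1)) (T u) :=
      (haab _ _).symm
    have h3 := hT (x n) (x n) u
    rw [← hx n] at h3
    have h4 : GM.G (x (n + 1)) u u ≤ 2 * GM.G (x (n + 1)) (x (n + 1)) u := hdouble _ _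
    simp only [hgdef]
    rw [hx n] at *
    linarith
  have hDle : (1 - d) * GM.G u u (T u) ≤ 0 := by
    have htend : Tendsto (fun n => a * GM.G (x n) (x n) u + (b + c) * g n
        + 2 * GM.G (x (n + 1)) (x (n + 1)) u) atTop (𝓝 0) := by
      have := ((hu'.const_mul a).add (hgtend.const_mul (b + c))).add (hqtend.const_mul 2)
      simpa using this
    exact ge_of_tendsto htend (Filter.Eventually.of_forall hDkey)
  have hD0 : GM.G u u (T u) = 0 := by
    have := GM.nonneg u u (T u)
    nlinarith
  have hfix : T u = u := by
    by_contra h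
    have := GM.pos_of_ne u (T u) (fun he => h he.symm)
    linarith [hD0]
  refine ⟨u, hfix, ?_, ?_⟩
  · -- uniqueness
    intro v hv
    by_contra hne
    have hpos := GM.pos_of_ne u v (fun he => hne he.symm)
    have h := hT u u v
    rw [hfix, hv] at h
    have e1 : GM.G u u u = 0 := GM.eq_zero_of_eq _ _ _ rfl rfl
    have e2 : GM.G v v v = 0 := GM.eq_zero_of_eq _ _ _ rfl rfl
    rw [e1, e2] at h
    nlinarith
  · -- continuity at u
    intro y hy
    have hTuu : GM.G u u (T u) = 0 := hD0
    set p : ℕ → ℝ := fun n => GM.G (y n) (y n) u with hpdef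
    have hp : Tendsto p atTop (𝓝 0) := hy
    set q : ℕ → ℝ := fun n => GM.G (y n) u u with hqdef
    have hq2 : ∀ n, q n ≤ 2 * p n := fun n => hdouble (y n) u
    have hqt : Tendsto q atTop (𝓝 0) := by
      refine squeeze_zero (fun n => GM.nonneg _ _ _) hq2 ?_
      simpa using hp.const_mul 2
    set t : ℕ → ℝ := fun n => GM.G (y n) (y n) (T (y n)) with htdef
    have ht : ∀ n, (1 - b) * t n ≤ a * q n + p n := by
      intro n
      have h0 : t n = GM.G (T (y n)) (y n) (y n) := haab (y n) (T (y n))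
      have h1 := GM.rect (T (y n)) (y n) (y n) u
      have h2 : GM.G u (y n) (y n) = p n := (haab (y n) u).symm
      have h3 := hT (y n) u u
      rw [hfix] at h3
      have e : GM.G u u u = 0 := GM.eq_zero_of_eq _ _ _ rfl rfl
      rw [e] at h3
      linarith
    have htle : ∀ n, t n ≤ (a * q n + p n) / (1 - b) := by
      intro n
      rw [le_div_iff₀ hb1]
      linarith [ht n]
    have htt : Tendsto t atTop (𝓝 0) := by
      refine squeeze_zero (fun n => GM.nonneg _ _ _) htle ?_
      have := ((hqt.const_mul a).add hp).div_const (1 - b)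
      simpa using this
    have hs : ∀ n, GM.G (T (y n)) (T (y n)) (T u) ≤ a * p n + (b + c) * t n := by
      intro n
      have h := hT (y n) (y n) u
      rw [hTuu] at h
      linarith
    refine squeeze_zero (fun n => GM.nonneg _ _ _) hs ?_
    have := (hp.const_mul a).add (htt.const_mul (b + c))
    simpa using this
end

section
/- Let (X,G) be a G-metric space and let T : X → X be a mapping such that: (1) G(Tx,Ty,Tz) ≤ a·G(x,Tx,Tx) + b·G(y,Ty,Ty) + c·G(z,Tz,Tz) for all x,y,z ∈ X, where a,b,c are nonnegative real numbers with 0 < a + b + c < 1; (2) T is G-continuous at a point u ∈ X; and (3) there exists x ∈ X such that the sequence of iterates (T^n x) has a subsequence (T^{n_i} x) that G-converges to u. Then u is the unique fixed point of T (Tu = u, and u is the only point with this property). -/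
open Filter Topology

theorem fixed_point_subsequence {X : Type*} [Nonempty X] (GM : GMetricStruct X)
    (T : X → X) (u : X)
    (a b c : ℝ) (ha : 0 ≤ a) (hb : 0 ≤ b) (hc : 0 ≤ c)
    (hpos : 0 < a + b + c) (hlt : a + b + c < 1)
    (hT : ∀ x y z : X, GM.G (T x) (T y) (T z) ≤
      a * GM.G x (T x) (T x) + b * GM.G y (T y) (T y) + c * GM.G z (T z) (T z))
    (hcont : GContinuousAt GM T u)
    (hsub : ∃ x : X, ∃ n : ℕ → ℕ, StrictMono n ∧
      GConvergesTo GM (fun i => T^[n i] x) u) :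
    T u = u ∧ ∀ v : X, T v = v → v = u := by
  obtain ⟨x, n, hmono, hconv⟩ := hsub
  set f : ℕ → X := fun m => T^[m] x with hf
  have hstep : ∀ m, f (m + 1) = T (f m) := fun m => Function.iterate_succ_apply' T m x
  set d : ℕ → ℝ := fun m => GM.G (f m) (f (m + 1)) (f (m + 1)) with hdd
  have hbc : 0 < 1 - (b + c) := by linarith
  set k : ℝ := a / (1 - (b + c)) with hk
  have hk0 : 0 ≤ k := div_nonneg ha (le_of_lt hbc)
  have hk1 : k < 1 := (div_lt_one hbc).mpr (by linarith)
  have hdec : ∀ m, d (m + 1) ≤ k * d m := by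
    intro m
    have h := hT (f m) (f (m + 1)) (f (m + 1))
    rw [← hstep m, ← hstep (m + 1)] at h
    have h2 : d (m + 1) * (1 - (b + c)) ≤ a * d m := by
      simp only [hdd] at h ⊢; nlinarith
    rw [hk, div_mul_eq_mul_div, le_div_iff₀ hbc]
    linarith
  have hgeo : ∀ m, d m ≤ k ^ m * d 0 := by
    intro m
    induction m with
    | zero => simp
    | succ m ih =>
      calc d (m + 1) ≤ k * d m := hdec m
        _ ≤ k * (k ^ m * d 0) := by
            exact mul_le_mul_of_nonneg_left ih hk0
        _ = k ^ (m + 1) * d 0 := by ring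
  have hd0 : Tendsto d atTop (𝓝 0) := by
    apply squeeze_zero (fun m => GM.nonneg _ _ _) hgeo
    have := (tendsto_pow_atTop_nhds_zero_of_lt_one hk0 hk1).mul_const (d 0)
    simpa using this
  have hdn : Tendsto (fun i => d (n i)) atTop (𝓝 0) :=
    hd0.comp hmono.tendsto_atTop
  have hy : Tendsto (fun i => GM.G (T (f (n i))) (T (f (n i))) (T u)) atTop (𝓝 0) :=
    hcont (fun i => f (n i)) hconv
  -- pointwise bound on G(u, u, T u)
  have key : ∀ i, GM.G u u (T u) ≤
      2 * (GM.G (f (n i)) (f (n i)) u + d (n i)) +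
        GM.G (T (f (n i))) (T (f (n i))) (T u) := by
    intro i
    set z := f (n i)
    set y := T z with hyz
    have hA : GM.G u u (T u) ≤ GM.G u y y + GM.G y u (T u) := GM.rect u u (T u) y
    have hB : GM.G y u (T u) = GM.G u y (T u) := by
      rw [GM.symm_cycle y u (T u), GM.symm_swap]
    have hC : GM.G u y (T u) ≤ GM.G u y y + GM.G y y (T u) := GM.rect u y (T u) y
    have hE : GM.G u y y ≤ GM.G u z z + GM.G z y y := GM.rect u y y z
    have hF : GM.G u z z = GM.G z z u := GM.symm_cycle u z z
    have hG : GM.G z y y = d (n i) := by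
      simp only [hdd, hyz]
      rw [hstep (n i)]
    linarith
  have hlim : Tendsto (fun i => 2 * (GM.G (f (n i)) (f (n i)) u + d (n i)) +
      GM.G (T (f (n i))) (T (f (n i))) (T u)) atTop (𝓝 0) := by
    have := ((hconv.add hdn).const_mul 2).add hy
    simpa using this
  have hzero : GM.G u u (T u) ≤ 0 := ge_of_tendsto' hlim key
  have hTu : T u = u := by
    by_contra h
    have := GM.pos_of_ne u (T u) (fun he => h he.symm)
    linarith
  refine ⟨hTu, fun v hv => ?_⟩
  by_contra h
  have h1 := hT v v u
  rw [hv, hTu] at h1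
  have h2 : GM.G v v v = 0 := GM.eq_zero_of_eq v v v rfl rfl
  have h3 : GM.G u u u = 0 := GM.eq_zero_of_eq u u u rfl rfl
  have h4 := GM.pos_of_ne v u h
  nlinarith
end

section
/- Let (X,G) be a complete G-metric space and let T : X → X satisfy G(Tx,Ty,Tz) ≤ α·G(x,y,z) + β·(G(y,Ty,Ty) + G(z,Tz,Tz) + G(x,Tx,Tx)) for all x,y,z ∈ X, where α,β are nonnegative real numbers with α + 3β < 1. Then T has a unique fixed point u ∈ X (Tu = u), and T is G-continuous at u. -/
open Filter Topology

private lemma gm_double {X : Type*} (GM : GMetricStruct X) (x y : X) :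
    GM.G x x y ≤ 2 * GM.G x y y := by
  have h := GM.rect x x y y
  have h2 : GM.G y x y = GM.G x y y := GM.symm_cycle y x y
  linarith

theorem fixed_point_sum_form {X : Type*} [Nonempty X] (GM : GMetricStruct X)
    (hcomp : GComplete GM) (T : X → X)
    (a β : ℝ) (ha : 0 ≤ a) (hβ : 0 ≤ β) (hab : a + 3 * β < 1)
    (hT : ∀ x y z : X, GM.G (T x) (T y) (T z) ≤
      a * GM.G x y z + β * (GM.G y (T y) (T y) + GM.G z (T z) (T z)
        + GM.G x (T x) (T x))) :
    ∃ u : X, T u = u ∧ (∀ v : X, T v = v → v = u) ∧ GContinuousAt GM T u := by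
  obtain ⟨x0⟩ := ‹Nonempty X›
  have h1 : (0:ℝ) < 1 - 2*β := by linarith
  set q : ℝ := (a + β) / (1 - 2*β) with hqdef
  have hq0 : 0 ≤ q := div_nonneg (by linarith) (by linarith)
  have hq1 : q < 1 := by rw [hqdef, div_lt_one h1]; linarith
  have h1q : (0:ℝ) < 1 - q := by linarith
  set x : ℕ → X := fun n => T^[n] x0 with hxdef
  have hxs : ∀ n, x (n+1) = T (x n) := fun n => Function.iterate_succ_apply' T n x0
  set d : ℕ → ℝ := fun n => GM.G (x n) (x (n+1)) (x (n+1)) with hddef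
  have hd0 : ∀ n, 0 ≤ d n := fun n => GM.nonneg _ _ _
  have hstep : ∀ n, d (n+1) ≤ q * d n := by
    intro n
    have h := hT (x n) (x (n+1)) (x (n+1))
    rw [← hxs n, ← hxs (n+1)] at h
    have hgoal : d (n+1) ≤ a * d n + β * (d (n+1) + d (n+1) + d n) := h
    rw [hqdef, div_mul_eq_mul_div, le_div_iff₀ h1]
    nlinarith [hd0 n, hd0 (n+1)]
  have hdq : ∀ n, d n ≤ q ^ n * d 0 := by
    intro n
    induction n with
    | zero => simp
    | succ n ih =>
      calc d (n+1) ≤ q * d n := hstep n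
        _ ≤ q * (q ^ n * d 0) := mul_le_mul_of_nonneg_left ih hq0
        _ = q ^ (n+1) * d 0 := by ring
  have hchain : ∀ n k, GM.G (x n) (x (n+k)) (x (n+k)) ≤ q ^ n * d 0 / (1 - q) := by
    intro n k
    induction k generalizing n with
    | zero =>
      have : GM.G (x n) (x (n+0)) (x (n+0)) = 0 := GM.eq_zero_of_eq _ _ _ rfl rfl
      rw [this]
      exact div_nonneg (mul_nonneg (pow_nonneg hq0 n) (hd0 0)) h1q.le
    | succ k ih =>
      have hr := GM.rect (x n) (x (n+(k+1))) (x (n+(k+1))) (x (n+1))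
      have hih := ih (n+1)
      have he : n + (k+1) = (n+1) + k := by omega
      rw [he] at hr
      have hdn : d n ≤ q ^ n * d 0 := hdq n
      have hps : q ^ (n+1) = q ^ n * q := pow_succ q n
      rw [he]
      have key : q ^ n * d 0 + q ^ (n+1) * d 0 / (1-q) ≤ q ^ n * d 0 / (1-q) := by
        rw [le_div_iff₀ h1q, add_mul, div_mul_cancel₀ _ (ne_of_gt h1q)]
        nlinarith [pow_nonneg hq0 n, hd0 0]
      have : GM.G (x n) (x (n+1)) (x (n+1)) = d n := rfl
      linarith [hr, hih]
  have hbig : ∀ N n, N ≤ n → GM.G (x N) (x n) (x n) ≤ q ^ N * d 0 / (1 - q) := by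
    intro N n hNn
    have := hchain N (n - N)
    rwa [Nat.add_sub_cancel' hNn] at this
  have hKtend : ∀ K : ℝ, Tendsto (fun n => q ^ n * K) atTop (𝓝 0) := by
    intro K
    have := (tendsto_pow_atTop_nhds_zero_of_lt_one hq0 hq1).mul_const K
    simpa using this
  have hCauchy : GCauchySeq GM x := by
    intro ε hε
    have := (hKtend (6 * d 0 / (1-q))).eventually (gt_mem_nhds hε)
    obtain ⟨N, hN⟩ := this.exists_forall_of_atTop
    refine ⟨N, fun n hn m hm l hl => ?_⟩
    have C0 : 0 ≤ q ^ N * d 0 / (1-q) :=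
      div_nonneg (mul_nonneg (pow_nonneg hq0 N) (hd0 0)) h1q.le
    have b1 : GM.G (x n) (x N) (x N) ≤ 2 * (q ^ N * d 0 / (1-q)) := by
      have e1 : GM.G (x n) (x N) (x N) = GM.G (x N) (x N) (x n) := GM.symm_cycle _ _ _
      have e2 := gm_double GM (x N) (x n)
      have := hbig N n hn
      linarith
    have b2 : GM.G (x m) (x N) (x N) ≤ 2 * (q ^ N * d 0 / (1-q)) := by
      have e1 : GM.G (x m) (x N) (x N) = GM.G (x N) (x N) (x m) := GM.symm_cycle _ _ _
      have e2 := gm_double GM (x N) (x m)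
      have := hbig N m hm
      linarith
    have b3 : GM.G (x N) (x N) (x l) ≤ 2 * (q ^ N * d 0 / (1-q)) := by
      have e2 := gm_double GM (x N) (x l)
      have := hbig N l hl
      linarith
    have r1 := GM.rect (x n) (x m) (x l) (x N)
    have e3 : GM.G (x N) (x m) (x l) = GM.G (x m) (x l) (x N) := GM.symm_cycle _ _ _
    have r2 := GM.rect (x m) (x l) (x N) (x N)
    have e4 : GM.G (x N) (x l) (x N) = GM.G (x N) (x N) (x l) := GM.symm_swap _ _ _
    have hNe := hN N le_rfl
    have : q ^ N * (6 * d 0 / (1-q)) = 6 * (q ^ N * d 0 / (1-q)) := by ring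
    linarith
  obtain ⟨u, hu⟩ := hcomp x hCauchy
  have hg : Tendsto (fun n => GM.G (x n) (x n) u) atTop (𝓝 0) := hu
  have hdtend : Tendsto d atTop (𝓝 0) :=
    squeeze_zero hd0 hdq (hKtend (d 0))
  -- x n → u conversions
  have hconv1 : ∀ n, GM.G (x n) u u ≤ 2 * GM.G (x n) (x n) u := by
    intro n
    have e1 : GM.G (x n) u u = GM.G u u (x n) := GM.symm_cycle _ _ _
    have e2 := gm_double GM u (x n)
    have e3 : GM.G u (x n) (x n) = GM.G (x n) (x n) u := GM.symm_cycle _ _ _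
    linarith
  -- fixed point
  have hfix : T u = u := by
    have key : ∀ n, (1 - 2*β) * GM.G u (T u) (T u) ≤
        GM.G (x (n+1)) (x (n+1)) u + 2*a * GM.G (x n) (x n) u + β * d n := by
      intro n
      have hr := GM.rect u (T u) (T u) (x (n+1))
      have h2 := hT (x n) u u
      rw [← hxs n] at h2
      have e1 : GM.G u (x (n+1)) (x (n+1)) = GM.G (x (n+1)) (x (n+1)) u :=
        GM.symm_cycle _ _ _
      have e2 := hconv1 n
      have hdn : GM.G (x n) (x (n+1)) (x (n+1)) = d n := rfl
      nlinarith [GM.nonneg (x n) u u, GM.nonneg (x n) (x n) u]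
    have hlim : Tendsto (fun n => GM.G (x (n+1)) (x (n+1)) u
        + 2*a * GM.G (x n) (x n) u + β * d n) atTop (𝓝 0) := by
      have h1' := hg.comp (tendsto_add_atTop_nat 1)
      have h2' := hg.const_mul (2*a)
      have h3' := hdtend.const_mul β
      have := (h1'.add h2').add h3'
      simpa using this
    have hle : (1 - 2*β) * GM.G u (T u) (T u) ≤ 0 :=
      ge_of_tendsto hlim (Eventually.of_forall key)
    have hc0 : 0 ≤ GM.G u (T u) (T u) := GM.nonneg _ _ _
    have hc : GM.G u (T u) (T u) = 0 := by nlinarith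
    by_contra hne
    have hpos := GM.pos_of_ne (T u) u hne
    have : GM.G u (T u) (T u) = GM.G (T u) (T u) u := GM.symm_cycle _ _ _
    linarith
  refine ⟨u, hfix, ?_, ?_⟩
  · -- uniqueness
    intro v hv
    have h := hT v v u
    rw [hv, hfix] at h
    have z1 : GM.G v v v = 0 := GM.eq_zero_of_eq _ _ _ rfl rfl
    have z2 : GM.G u u u = 0 := GM.eq_zero_of_eq _ _ _ rfl rfl
    have hnn : 0 ≤ GM.G v v u := GM.nonneg _ _ _
    by_contra hne
    have hpos := GM.pos_of_ne v u hne
    nlinarith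
  · -- continuity
    intro y hy
    have hbnd : ∀ n, GM.G (T (y n)) (T (y n)) (T u) ≤
        (a + 2*β*((2+a)/(1-2*β))) * GM.G (y n) (y n) u := by
      intro n
      have z2 : GM.G u (T u) (T u) = 0 := by
        rw [hfix]; exact GM.eq_zero_of_eq _ _ _ rfl rfl
      have h2 := hT (y n) (y n) u
      rw [z2] at h2
      -- bound t := G(y, Ty, Ty)
      have hr := GM.rect (y n) (T (y n)) (T (y n)) u
      have h3 := hT u (y n) (y n)
      rw [hfix] at h3
      have z3 : GM.G u u u = 0 := GM.eq_zero_of_eq _ _ _ rfl rfl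
      rw [z3] at h3
      -- h3 : G u (T y) (T y) ≤ a * G u y y + β * (t + t + 0)
      have e1 : GM.G (y n) u u = GM.G u u (y n) := GM.symm_cycle _ _ _
      have e2 := gm_double GM u (y n)
      have e3 : GM.G u (y n) (y n) = GM.G (y n) (y n) u := GM.symm_cycle _ _ _
      have ht : (1-2*β) * GM.G (y n) (T (y n)) (T (y n)) ≤ (2+a) * GM.G (y n) (y n) u := by
        nlinarith
      have ht' : GM.G (y n) (T (y n)) (T (y n)) ≤ (2+a)/(1-2*β) * GM.G (y n) (y n) u := by
        rw [div_mul_eq_mul_div, le_div_iff₀ h1]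
        linarith
      have h2β' : 2*β * GM.G (y n) (T (y n)) (T (y n)) ≤
          2*β * ((2+a)/(1-2*β) * GM.G (y n) (y n) u) :=
        mul_le_mul_of_nonneg_left ht' (by linarith)
      nlinarith
    refine squeeze_zero (fun n => GM.nonneg _ _ _) hbnd ?_
    have := hy.const_mul (a + 2*β*((2+a)/(1-2*β)))
    simpa using this
end
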